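/- If 0 < t_1 < t_2 < … is a strictly increasing sequence of positive reals tending to infinity and Z(s) = ∑_{n=1}^∞ t_n^{-s} converges for all large real s, then t_1 = lim_{s→∞} Z(s)^{-1/s}. -/

import Mathlib

set_option maxHeartbeats 1000000


open Filter Topology

/-- If `0 < t 0 < t 1 < …` tends to infinity and `Z(s) = ∑' n, (t n)^(-s)` converges
for all large real `s`, then the smallest term `t 0` (i.e. `t₁`) is recovered as
`lim_{s→∞} Z(s)^(-1/s)`. -/
theorem stmt1 (t : ℕ → ℝ) (hmono : StrictMono t) (hpos : ∀ n, 0 < t n)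
    (htop : Tendsto t atTop atTop)
    (hconv : ∃ S : ℝ, ∀ s : ℝ, S ≤ s → Summable (fun n : ℕ => (t n) ^ (-s))) :
    Tendsto (fun s : ℝ => (∑' n : ℕ, (t n) ^ (-s)) ^ (-1 / s)) atTop (𝓝 (t 0)) := by
  obtain ⟨S, hS⟩ := hconv
  have ht0 : 0 < t 0 := hpos 0
  have ht1 : 0 < t 1 := hpos 1
  have h01 : t 0 < t 1 := hmono Nat.zero_lt_one
  obtain ⟨r, hr⟩ : ∃ r : ℝ, r = t 0 / t 1 := ⟨_, rfl⟩
  have hr0 : 0 < r := hr ▸ div_pos ht0 ht1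
  have hr1 : r < 1 := hr ▸ (div_lt_one ht1).mpr h01
  have hMsum : Summable (fun n : ℕ => (t (n + 1)) ^ (-S)) :=
    (summable_nat_add_iff 1).mpr (hS S le_rfl)
  obtain ⟨M, hM⟩ : ∃ M : ℝ, M = ∑' n : ℕ, (t (n + 1)) ^ (-S) := ⟨_, rfl⟩
  have hM0 : 0 ≤ M := hM ▸ tsum_nonneg fun n => Real.rpow_nonneg (hpos _).le _
  obtain ⟨C, hC⟩ : ∃ C : ℝ, C = t 1 ^ S * M := ⟨_, rfl⟩
  have hC0 : 0 ≤ C := hC ▸ mul_nonneg (Real.rpow_nonneg ht1.le _) hM0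
  -- C * r ^ s → 0
  have hCr : Tendsto (fun s : ℝ => C * r ^ s) atTop (𝓝 0) := by
    have := (tendsto_rpow_atTop_of_base_lt_one r (by linarith) hr1).const_mul C
    simpa using this
  -- inner limit : (1 + C r^s)^(-1/s) → 1
  have hexp : Tendsto (fun s : ℝ => -1 / s) atTop (𝓝 0) := by
    have := (tendsto_inv_atTop_zero : Tendsto (fun x : ℝ => x⁻¹) atTop (𝓝 0)).neg
    simpa [neg_div, one_div] using this
  have h2 : Tendsto (fun s : ℝ => (2 : ℝ) ^ (-1 / s)) atTop (𝓝 1) := by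
    have := (Real.continuousAt_const_rpow (a := (2:ℝ)) two_ne_zero).tendsto.comp hexp
    simpa [Function.comp_def] using this
  have hinner : Tendsto (fun s : ℝ => (1 + C * r ^ s) ^ (-1 / s)) atTop (𝓝 1) := by
    apply tendsto_of_tendsto_of_tendsto_of_le_of_le' h2 tendsto_const_nhds
    · filter_upwards [hCr.eventually_le_const one_pos, eventually_ge_atTop (1 : ℝ)]
        with s hs1 hs2
      have h1s : (1 : ℝ) ≤ 1 + C * r ^ s := by
        have : 0 ≤ C * r ^ s := mul_nonneg hC0 (Real.rpow_nonneg hr0.le _)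
        linarith
      have h2s : 1 + C * r ^ s ≤ 2 := by linarith
      exact Real.rpow_le_rpow_of_nonpos (by linarith) h2s
        (by rw [neg_div]; exact neg_nonpos_of_nonneg (by positivity))
    · filter_upwards [hCr.eventually_le_const one_pos, eventually_ge_atTop (1 : ℝ)]
        with s hs1 hs2
      have h1s : (1 : ℝ) ≤ 1 + C * r ^ s := by
        have : 0 ≤ C * r ^ s := mul_nonneg hC0 (Real.rpow_nonneg hr0.le _)
        linarith
      calc (1 + C * r ^ s) ^ (-1 / s) ≤ (1 : ℝ) ^ (-1 / s) :=
            Real.rpow_le_rpow_of_nonpos one_pos h1s (by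
              have : (0:ℝ) < s := by linarith
              have := div_nonneg (zero_le_one) this.le
              simpa [neg_div] using neg_nonpos_of_nonneg this)
        _ = 1 := Real.one_rpow _
  have hL : Tendsto (fun s : ℝ => t 0 * (1 + C * r ^ s) ^ (-1 / s)) atTop (𝓝 (t 0)) := by
    simpa using hinner.const_mul (t 0)
  apply tendsto_of_tendsto_of_tendsto_of_le_of_le' hL tendsto_const_nhds
  · -- lower bound : t0 * (1+Cr^s)^(-1/s) ≤ Z(s)^(-1/s)
    filter_upwards [eventually_ge_atTop S, eventually_ge_atTop (1 : ℝ),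
      hCr.eventually_le_const one_pos] with s hsS hs1 hsC
    have hs0 : (0 : ℝ) < s := by linarith
    have hZsum : Summable (fun n : ℕ => (t n) ^ (-s)) := hS s hsS
    have hterm : ∀ n : ℕ, (t (n + 1)) ^ (-s) ≤ t 1 ^ (S - s) * (t (n + 1)) ^ (-S) := by
      intro n
      have h1n : t 1 ≤ t (n + 1) := hmono.monotone (Nat.succ_le_succ (Nat.zero_le n))
      have : (t (n + 1)) ^ (-s) = (t (n + 1)) ^ (S - s) * (t (n + 1)) ^ (-S) := by
        rw [← Real.rpow_add (hpos _)]; ring_nf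
      rw [this]
      exact mul_le_mul_of_nonneg_right
        (Real.rpow_le_rpow_of_nonpos ht1 h1n (by linarith))
        (Real.rpow_nonneg (hpos _).le _)
    have htail : (∑' n : ℕ, (t (n + 1)) ^ (-s)) ≤ t 1 ^ (S - s) * M := by
      rw [hM, ← tsum_mul_left]
      exact Summable.tsum_le_tsum hterm ((summable_nat_add_iff 1).mpr hZsum) (hMsum.mul_left _)
    have hup : (∑' n : ℕ, (t n) ^ (-s)) ≤ t 0 ^ (-s) * (1 + C * r ^ s) := by
      have key : t 0 ^ (-s) * (C * r ^ s) = t 1 ^ (S - s) * M := by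
        rw [hr, Real.div_rpow ht0.le ht1.le, hC, Real.rpow_sub ht1]
        have e0 : t 0 ^ (-s) * t 0 ^ s = 1 := by
          rw [← Real.rpow_add ht0]; simp
        field_simp
        nlinarith [Real.rpow_pos_of_pos ht1 s, e0]
      rw [Summable.tsum_eq_zero_add hZsum, mul_add, mul_one, key]
      exact add_le_add (le_refl _) htail
    have hZpos : 0 < ∑' n : ℕ, (t n) ^ (-s) := by
      have hle : t 0 ^ (-s) ≤ ∑' n : ℕ, (t n) ^ (-s) :=
        Summable.le_tsum hZsum 0 fun n _ => Real.rpow_nonneg (hpos n).le _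
      exact lt_of_lt_of_le (Real.rpow_pos_of_pos ht0 _) hle
    calc t 0 * (1 + C * r ^ s) ^ (-1 / s)
        = (t 0 ^ (-s) * (1 + C * r ^ s)) ^ (-1 / s) := by
          rw [Real.mul_rpow (Real.rpow_nonneg ht0.le _) (by positivity),
            ← Real.rpow_mul ht0.le]
          congr 2
          field_simp
          rw [Real.rpow_one]
      _ ≤ (∑' n : ℕ, (t n) ^ (-s)) ^ (-1 / s) := by
          apply Real.rpow_le_rpow_of_nonpos hZpos hup
          · rw [neg_div]; exact neg_nonpos_of_nonneg (by positivity)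
  · -- upper bound : Z(s)^(-1/s) ≤ t 0
    filter_upwards [eventually_ge_atTop S, eventually_ge_atTop (1 : ℝ)] with s hsS hs1
    have hs0 : (0 : ℝ) < s := by linarith
    have hZsum : Summable (fun n : ℕ => (t n) ^ (-s)) := hS s hsS
    have hle : t 0 ^ (-s) ≤ ∑' n : ℕ, (t n) ^ (-s) :=
      Summable.le_tsum hZsum 0 fun n _ => Real.rpow_nonneg (hpos n).le _
    have hz : (-1 : ℝ) / s ≤ 0 := by
      rw [neg_div]; exact neg_nonpos_of_nonneg (by positivity)
    have := Real.rpow_le_rpow_of_nonpos (Real.rpow_pos_of_pos ht0 (-s)) hle hz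
    calc (∑' n : ℕ, (t n) ^ (-s)) ^ (-1 / s) ≤ (t 0 ^ (-s)) ^ (-1/s) := this
      _ = t 0 := by
        rw [← Real.rpow_mul ht0.le]
        rw [show -s * (-1 / s) = 1 by field_simp]
        exact Real.rpow_one _
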